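/- For every real number φ and every sign ε ∈ {+1, −1}, the complex numbers a = cos φ, b = ((1 + iε)/2) sin φ, c = −((1 − iε)/2) sin φ satisfy conj(a)·b + conj(c)·a = 0, conj(b)·c + conj(c)·b = 0, and |a|² + |b|² + |c|² = 1. -/

import Mathlib

/-- For every real `φ` and sign `ε ∈ {+1, −1}`, the coefficients `a = cos φ`,
`b = ((1 + iε)/2) sin φ`, `c = −((1 − iε)/2) sin φ` satisfy the unitarity conditions
`conj(a)b + conj(c)a = 0`, `conj(b)c + conj(c)b = 0` and `|a|² + |b|² + |c|² = 1`. -/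
theorem case_two_coefficients_unitarity (φ ε : ℝ) (hε : ε = 1 ∨ ε = -1) (a b c : ℂ)
    (ha : a = Real.cos φ)
    (hb : b = (1 + Complex.I * ε) / 2 * Real.sin φ)
    (hc : c = -((1 - Complex.I * ε) / 2) * Real.sin φ) :
    (starRingEnd ℂ) a * b + (starRingEnd ℂ) c * a = 0 ∧
    (starRingEnd ℂ) b * c + (starRingEnd ℂ) c * b = 0 ∧
    ‖a‖ ^ 2 + ‖b‖ ^ 2 + ‖c‖ ^ 2 = 1 := by
  have h1 : Real.cos φ ^ 2 + Real.sin φ ^ 2 = 1 := Real.cos_sq_add_sin_sq φ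
  have hε2 : (ε : ℂ) ^ 2 = 1 := by rcases hε with h | h <;> subst h <;> norm_num
  have hε2' : ε ^ 2 = 1 := by rcases hε with h | h <;> subst h <;> norm_num
  subst ha hb hc
  refine ⟨?_, ?_, ?_⟩
  · simp only [map_mul, map_div₀, map_add, map_sub, map_one, map_neg, map_ofNat,
      Complex.conj_I, Complex.conj_ofReal]
    ring
  · simp only [map_mul, map_div₀, map_add, map_sub, map_one, map_neg, map_ofNat,
      Complex.conj_I, Complex.conj_ofReal]
    linear_combination ((Real.sin φ : ℂ) ^ 2 / 2) * hε2 + (-(ε : ℂ) ^ 2 * (Real.sin φ : ℂ) ^ 2 / 2) * Complex.I_sq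
  · simp only [Complex.sq_norm, Complex.normSq_mul, Complex.normSq_neg, Complex.normSq_div,
      Complex.normSq_ofReal]
    simp [Complex.normSq_apply]
    nlinarith [h1, hε2', sq_nonneg (Real.sin φ)]
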